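/- Let F be the involutive monoid morphism on words over the 4-letter alphabet {a,b,α,β} defined by F(a)=α, F(α)=a, F(b)=β, F(β)=b. If z and p are nonempty words satisfying zp = F(p)F(z), then there exists a nonempty word x and natural numbers i, j such that z = x(F(x)x)^i and p = (F(x)x)^j F(x). -/

import Mathlib

inductive Letter | a | b | α | β

/-- The letter involution a ↔ α, b ↔ β. -/
def swapL : Letter → Letter
  | Letter.a => Letter.α
  | Letter.α => Letter.a
  | Letter.b => Letter.β
  | Letter.β => Letter.b

/-- The involutive monoid morphism F extended letterwise to words. -/
def F : FreeMonoid Letter →* FreeMonoid Letter := FreeMonoid.map swapL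

lemma swapL_swapL (x : Letter) : swapL (swapL x) = x := by cases x <;> rfl

lemma F_F (w : FreeMonoid Letter) : F (F w) = w := by
  apply FreeMonoid.toList.injective
  simp [F, FreeMonoid.toList_map, List.map_map, Function.comp_def, swapL_swapL]

lemma length_F (w : FreeMonoid Letter) : (F w).length = w.length := by
  simp only [F, FreeMonoid.length]
  exact List.length_map _

lemma eq_one_of_F_eq (w : FreeMonoid Letter) (h : F w = w) : w = 1 := by
  have h' : w.toList.map swapL = w.toList := congrArg FreeMonoid.toList h
  cases hl : FreeMonoid.toList w with
  | nil => exact FreeMonoid.toList.injective hl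
  | cons a l =>
    rw [hl] at h'
    have : swapL a = a := by simpa using congrArg (·.head?) h'
    cases a <;> simp [swapL] at this

lemma split {u v u' v' : FreeMonoid Letter} (h : u * v = u' * v')
    (hl : u.length ≤ u'.length) : ∃ t, u' = u * t ∧ v = t * v' := by
  have h' : FreeMonoid.toList u ++ FreeMonoid.toList v
      = FreeMonoid.toList u' ++ FreeMonoid.toList v' := h
  rcases List.append_eq_append_iff.mp h' with ⟨t, ha, hb⟩ | ⟨t, ha, hb⟩
  · refine ⟨FreeMonoid.ofList t, FreeMonoid.toList.injective ?_, FreeMonoid.toList.injective ?_⟩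
    · simpa [FreeMonoid.toList_mul] using ha
    · simpa [FreeMonoid.toList_mul] using hb
  · have hlen := congrArg List.length ha
    rw [List.length_append] at hlen
    have hl' : (FreeMonoid.toList u).length ≤ (FreeMonoid.toList u').length := hl
    have ht : t = [] := List.eq_nil_of_length_eq_zero (by omega)
    subst ht
    refine ⟨1, FreeMonoid.toList.injective ?_, FreeMonoid.toList.injective ?_⟩
    · rw [FreeMonoid.toList_mul, FreeMonoid.toList_one, List.append_nil]
      simpa using ha.symm
    · rw [FreeMonoid.toList_mul, FreeMonoid.toList_one, List.nil_append]
      simpa using hb.symm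

lemma shuffle (a b : FreeMonoid Letter) (n : ℕ) : a * (b * a) ^ n = (a * b) ^ n * a := by
  induction n with
  | zero => simp
  | succ n ih => simp only [pow_succ, ← mul_assoc, ih]

lemma one_le_len (w : FreeMonoid Letter) (h : w ≠ 1) : 1 ≤ w.length :=
  Nat.one_le_iff_ne_zero.mpr (fun h0 => h (FreeMonoid.length_eq_zero.mp h0))

lemma key : ∀ N : ℕ, ∀ u v : FreeMonoid Letter, u.length + v.length ≤ N →
    ((u ≠ 1 → v ≠ 1 → u * v = F v * F u →
       ∃ x : FreeMonoid Letter, x ≠ 1 ∧ ∃ i j : ℕ,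
         u = x * (F x * x) ^ i ∧ v = (F x * x) ^ j * F x) ∧
     (u ≠ 1 → u * v = v * F u →
       ∃ x : FreeMonoid Letter, x ≠ 1 ∧ ∃ d j : ℕ,
         u = (F x * x) ^ d ∧ v = (F x * x) ^ j * F x)) := by
  intro N
  induction N using Nat.strong_induction_on with
  | _ N ih =>
  intro u v hN
  constructor
  · intro hu hv heq
    have hu1 : 1 ≤ u.length := one_le_len u hu
    have hv1 : 1 ≤ v.length := one_le_len v hv
    rcases le_or_gt v.length u.length with hle | hlt
    · obtain ⟨t, h1, h2⟩ := split heq.symm (by rw [length_F]; exact hle)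
      -- h1 : u = F v * t, h2 : F u = t * v
      rcases eq_or_ne t 1 with ht1 | ht1
      · subst ht1
        rw [mul_one] at h1
        exact ⟨u, hu, 0, 0, by simp, by rw [pow_zero, one_mul, h1, F_F]⟩
      · have heq2 : t * v = v * F t := by
          have hthis : F u = v * F t := by rw [h1, map_mul, F_F]
          rw [← h2, hthis]
        have hlt' : t.length + v.length ≤ u.length := by
          have h3 := congrArg FreeMonoid.length h1
          rw [FreeMonoid.length_mul, length_F] at h3
          omega
        have hM : u.length < N := by omega
        obtain ⟨x, hx, d, j, hxt, hxu⟩ := (ih u.length hM t v (by omega)).2 ht1 heq2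
        refine ⟨x, hx, j + d, j, ?_, hxu⟩
        rw [h1, hxu, hxt, map_mul, map_pow, map_mul, F_F, ← shuffle, mul_assoc, ← pow_add]
    · obtain ⟨t, h1, h2⟩ := split heq (by rw [length_F]; omega)
      -- h1 : F v = u * t, h2 : v = t * F u
      have ht1 : t ≠ 1 := by
        intro h0; subst h0; rw [mul_one] at h1
        have h3 := congrArg FreeMonoid.length h1
        rw [length_F] at h3; omega
      have heq2 : t * F u = F u * F t := by
        have hv2 : v = F u * F t := by rw [← F_F v, h1, map_mul]
        rw [← h2, hv2]
      have hlen : t.length + (F u).length ≤ v.length := by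
        have h3 := congrArg FreeMonoid.length h1
        rw [length_F, FreeMonoid.length_mul] at h3
        rw [length_F]; omega
      have hM : v.length < N := by omega
      obtain ⟨x, hx, d, j, hxt, hxu⟩ := (ih v.length hM t (F u) hlen).2 ht1 heq2
      refine ⟨x, hx, j, d + j, ?_, ?_⟩
      · rw [← F_F u, hxu, map_mul, map_pow, map_mul, F_F, ← shuffle]
      · rw [h2, hxt, hxu, ← mul_assoc, ← pow_add]
  · intro hu heq
    have hu1 : 1 ≤ u.length := one_le_len u hu
    rcases le_or_gt u.length v.length with hle | hlt
    · obtain ⟨t, h1, h2⟩ := split heq hle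
      -- h1 : v = u * t, h2 : v = t * F u
      have heq2 : u * t = t * F u := by rw [← h1, h2]
      have hlen : u.length + t.length ≤ v.length := by
        have h3 := congrArg FreeMonoid.length h1
        rw [FreeMonoid.length_mul] at h3; omega
      have hM : v.length < N := by omega
      obtain ⟨x, hx, d, j, hxu, hxt⟩ := (ih v.length hM u t hlen).2 hu heq2
      exact ⟨x, hx, d, d + j, hxu, by rw [h1, hxu, hxt, ← mul_assoc, ← pow_add]⟩
    · have hv : v ≠ 1 := by
        intro h0; subst h0
        rw [mul_one, one_mul] at heq
        exact hu (eq_one_of_F_eq u heq.symm)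
      have hv1 : 1 ≤ v.length := one_le_len v hv
      obtain ⟨t, h1, h2⟩ := split heq.symm (le_of_lt hlt)
      -- h1 : u = v * t, h2 : F u = t * v
      have ht1 : t ≠ 1 := by
        intro h0; subst h0; rw [mul_one] at h1
        have h3 := congrArg FreeMonoid.length h1
        omega
      have heq2 : t * v = F v * F t := by
        have hthis : F u = F v * F t := by rw [h1, map_mul]
        rw [← h2, hthis]
      have hlen : t.length + v.length ≤ u.length := by
        have h3 := congrArg FreeMonoid.length h1
        rw [FreeMonoid.length_mul] at h3; omega
      have hM : u.length < N := by omega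
      obtain ⟨x, hx, i, j, hxt, hxv⟩ := (ih u.length hM t v hlen).1 ht1 hv heq2
      refine ⟨x, hx, j + 1 + i, j, ?_, hxv⟩
      rw [h1, hxv, hxt, pow_add, pow_add, pow_one]
      simp [mul_assoc]

/-- Solutions of the word equation z p = F(p) F(z). -/
theorem word_equation_F_one (z p : FreeMonoid Letter) (hz : z ≠ 1) (hp : p ≠ 1)
    (h : z * p = F p * F z) :
    ∃ x : FreeMonoid Letter, x ≠ 1 ∧ ∃ i j : ℕ,
      z = x * (F x * x) ^ i ∧ p = (F x * x) ^ j * F x := by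
  exact (key (z.length + p.length) z p le_rfl).1 hz hp h
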